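/- Let a₀ ∈ M_+(n,m) and initial velocity a'(0) = c a₀ with c < 0. Then the geodesic of the metric ⟨u,v⟩_a = tr(u(a^Ta)^{-1}v^T)√det(a^Ta) with these initial data is a(t) = (1 + cmt/2)^{2/m} a₀, which reaches the zero matrix at the finite time T = 2/(|c| m). In particular M_+(n,m) is geodesically incomplete. -/

import Mathlib

open Matrix

attribute [local instance] Matrix.frobeniusNormedAddCommGroup Matrix.frobeniusNormedSpace

noncomputable section

/-- Moore-Penrose pseudoinverse of a full-rank `n × m` matrix. -/
def aplus {n m : ℕ} (a : Matrix (Fin n) (Fin m) ℝ) : Matrix (Fin m) (Fin n) ℝ :=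
  (aᵀ * a)⁻¹ * aᵀ

/-- Right-hand side of the geodesic equation `a_tt = geoRHS (a, a_t)` of the
metric `⟨u,v⟩_a = tr(u (aᵀa)⁻¹ vᵀ)√det(aᵀa)` on full-rank `n × m` matrices. -/
def geoRHS {n m : ℕ} (x v : Matrix (Fin n) (Fin m) ℝ) : Matrix (Fin n) (Fin m) ℝ :=
  v * (xᵀ * x)⁻¹ * vᵀ * x + v * (xᵀ * x)⁻¹ * xᵀ * v - x * (xᵀ * x)⁻¹ * vᵀ * v
    + ((1 / 2) * Matrix.trace (v * (xᵀ * x)⁻¹ * vᵀ)) • x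
    - (Matrix.trace (v * (xᵀ * x)⁻¹ * xᵀ)) • v

lemma gram_isUnit {n m : ℕ} (a0 : Matrix (Fin n) (Fin m) ℝ) (ha0 : a0.rank = m) :
    IsUnit (a0ᵀ * a0) := by
  have hr : (a0ᵀ * a0).rank = m := by rw [Matrix.rank_transpose_mul_self, ha0]
  rw [← Matrix.mulVec_surjective_iff_isUnit]
  have : LinearMap.range (a0ᵀ * a0).mulVecLin = ⊤ := by
    apply Submodule.eq_top_of_finrank_eq
    rw [Matrix.rank] at hr
    simp [hr]
  intro v
  obtain ⟨w, hw⟩ := LinearMap.range_eq_top.mp this v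
  exact ⟨w, hw⟩

lemma geoRHS_smul {n m : ℕ} (a0 : Matrix (Fin n) (Fin m) ℝ) (hG : IsUnit (a0ᵀ * a0))
    {α β : ℝ} (hα : α ≠ 0) :
    geoRHS (α • a0) (β • a0) = ((1 - (m : ℝ)/2) * β^2 / α) • a0 := by
  have hGd : IsUnit (a0ᵀ * a0).det := (Matrix.isUnit_iff_isUnit_det _).mp hG
  have h1 : a0 * (a0ᵀ * a0)⁻¹ * a0ᵀ * a0 = a0 := by
    rw [Matrix.mul_assoc, Matrix.mul_assoc, Matrix.nonsing_inv_mul _ hGd, Matrix.mul_one]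
  have h2 : Matrix.trace (a0 * (a0ᵀ * a0)⁻¹ * a0ᵀ) = (m : ℝ) := by
    rw [Matrix.trace_mul_comm, ← Matrix.mul_assoc, Matrix.mul_nonsing_inv _ hGd]
    simp
  have hinv : ((α • a0)ᵀ * (α • a0))⁻¹ = (α^2)⁻¹ • (a0ᵀ * a0)⁻¹ := by
    apply Matrix.inv_eq_right_inv
    simp only [Matrix.transpose_smul, Matrix.smul_mul, Matrix.mul_smul, smul_smul,
      Matrix.mul_nonsing_inv _ hGd]
    rw [show (α ^ 2)⁻¹ * (α * α) = 1 by field_simp, one_smul]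
  rw [geoRHS, hinv]
  simp only [Matrix.transpose_smul, Matrix.smul_mul, Matrix.mul_smul, smul_smul,
    Matrix.trace_smul, smul_eq_mul, h1, h2]
  rw [← add_smul, ← sub_smul, ← add_smul, ← sub_smul]
  congr 1
  field_simp
  ring

/-- with initial velocity `c • a₀`, `c < 0`, the geodesic is
`a(t) = (1 + c m t / 2)^{2/m} a₀`, reaching the zero matrix at
`T = 2 / (|c| m)`; in particular the space is geodesically incomplete. -/
theorem stmt_11 {n m : ℕ} (hmn : m ≤ n) (hm : 0 < m)
    (a0 : Matrix (Fin n) (Fin m) ℝ) (ha0 : a0.rank = m)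
    (c : ℝ) (hc : c < 0) (T : ℝ) (hT : T = 2 / (|c| * (m : ℝ)))
    (A : ℝ → Matrix (Fin n) (Fin m) ℝ)
    (hA : ∀ t, A t = ((1 + c * (m : ℝ) * t / 2) ^ ((2 : ℝ) / (m : ℝ))) • a0) :
    A 0 = a0 ∧ HasDerivAt A (c • a0) 0 ∧
      (∀ t, 0 ≤ t → t < T → HasDerivAt (deriv A) (geoRHS (A t) (deriv A t)) t) ∧
      A T = 0 := by
  have hm' : (m : ℝ) ≠ 0 := Nat.cast_ne_zero.mpr hm.ne'
  have hmpos : (0:ℝ) < m := Nat.cast_pos.mpr hm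
  have hc' : c ≠ 0 := hc.ne
  set p : ℝ := (2 : ℝ) / (m : ℝ) with hp
  set g : ℝ → ℝ := fun t => 1 + c * (m : ℝ) * t / 2 with hgdef
  have hAfun : A = fun t => (g t ^ p) • a0 := funext hA
  have hg : ∀ t, HasDerivAt g (c * (m:ℝ) * 1 / 2) t := by
    intro t
    exact ((hasDerivAt_id t).const_mul (c * (m:ℝ))).div_const 2 |>.const_add 1
  have hgT : g T = 0 := by
    have habs : |c| = -c := abs_of_neg hc
    simp only [hgdef, hT, habs]
    field_simp
    ring
  have hcm : c * (m:ℝ) < 0 := mul_neg_of_neg_of_pos hc hmpos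
  have hgpos : ∀ s, s < T → 0 < g s := by
    intro s hs
    have h2 := mul_lt_mul_of_neg_left hs hcm
    simp only [hgdef] at hgT ⊢
    linarith
  have hrp : ∀ t, g t ≠ 0 → HasDerivAt (fun s => g s ^ p) (c * g t ^ (p - 1)) t := by
    intro t ht
    have h := (Real.hasDerivAt_rpow_const (p := p) (Or.inl ht)).comp t (hg t)
    refine h.congr_deriv ?_
    simp only [hp]
    field_simp
  have hAd : ∀ t, g t ≠ 0 → HasDerivAt A ((c * g t ^ (p - 1)) • a0) t := by
    intro t ht
    rw [hAfun]
    exact (hrp t ht).smul_const a0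
  have hG := gram_isUnit a0 ha0
  refine ⟨?_, ?_, ?_, ?_⟩
  · rw [hA 0]
    norm_num [hgdef]
  · have h0 : g 0 = 1 := by norm_num [hgdef]
    have := hAd 0 (by rw [h0]; norm_num)
    rwa [h0, Real.one_rpow, mul_one] at this
  · intro t _ht0 htT
    have hgt : 0 < g t := hgpos t htT
    have hEv : deriv A =ᶠ[nhds t] fun s => (c * g s ^ (p - 1)) • a0 := by
      filter_upwards [Iio_mem_nhds htT] with s hs
      exact (hAd s (hgpos s hs).ne').deriv
    have hder2 : HasDerivAt (fun s => (c * g s ^ (p - 1)) • a0)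
        ((c * ((p - 1) * g t ^ (p - 1 - 1) * (c * (m:ℝ) * 1 / 2))) • a0) t := by
      exact (((Real.hasDerivAt_rpow_const (p := p - 1) (Or.inl hgt.ne')).comp t
        (hg t)).const_mul c).smul_const a0
    have hkey : HasDerivAt (deriv A)
        ((c * ((p - 1) * g t ^ (p - 1 - 1) * (c * (m:ℝ) * 1 / 2))) • a0) t :=
      hder2.congr_of_eventuallyEq hEv
    have hdv : deriv A t = (c * g t ^ (p - 1)) • a0 := (hAd t hgt.ne').deriv
    have hαpos : 0 < g t ^ p := Real.rpow_pos_of_pos hgt p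
    rw [hA t, hdv]
    rw [geoRHS_smul a0 hG hαpos.ne']
    convert hkey using 2
    have e1 : (c * g t ^ (p - 1)) ^ 2 = c ^ 2 * g t ^ (2 * (p - 1)) := by
      rw [mul_pow, ← Real.rpow_natCast (g t ^ (p - 1)) 2, ← Real.rpow_mul hgt.le]
      norm_num [mul_comm]
    have e2 : g t ^ (2 * (p - 1)) / g t ^ p = g t ^ (p - 2) := by
      rw [← Real.rpow_sub hgt]
      congr 1
      ring
    have e3 : (1 - (m:ℝ)/2) * (c * g t ^ (p - 1)) ^ 2 / g t ^ p
        = ((1 - (m:ℝ)/2) * c ^ 2) * g t ^ (p - 2) := by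
      rw [e1, ← e2]; ring
    rw [e3, show p - 1 - 1 = p - 2 by ring]
    have hsc : c * ((p - 1) * (c * (m:ℝ) * 1 / 2)) = (1 - (m:ℝ)/2) * c ^ 2 := by
      simp only [hp]
      field_simp
    rw [← hsc]
    ring
  · rw [hA T]
    have : (1 + c * (m:ℝ) * T / 2) = 0 := hgT
    rw [this, Real.zero_rpow (by positivity : p ≠ 0), zero_smul]
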